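/- Let 0<p_B≤p_A<1, π=p_A−p_B and g>0. Given ψ_0∈(−∞,0], the ordinary differential equation ψ'=p_B(e^{gψ}−1)/g−p_Aψ has a unique solution ψ on [0,+∞) with ψ(0)=ψ_0, and this solution satisfies ψ_0 ≤ ψ(t)e^{πt} ≤ 0 for all t≥0. -/

import Mathlib

open MeasureTheory ProbabilityTheory Filter


section stmt15aux
open Set Real

noncomputable def Fv (pA pB g u : ℝ) : ℝ := pB * (Real.exp (g * u) - 1) / g - pA * u
noncomputable def clampf (ψ0 u : ℝ) : ℝ := max (min u 0) ψ0
noncomputable def Gv (pA pB g ψ0 u : ℝ) : ℝ := Fv pA pB g (clampf ψ0 u)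

lemma hasDerivAt_Fv {g : ℝ} (pA pB : ℝ) (hg : 0 < g) (u : ℝ) :
    HasDerivAt (Fv pA pB g) (pB * Real.exp (g * u) - pA) u := by
  have h1 : HasDerivAt (fun u : ℝ => g * u) g u := by
    simpa using (hasDerivAt_id u).const_mul g
  have h2 : HasDerivAt (fun u : ℝ => Real.exp (g * u)) (Real.exp (g * u) * g) u :=
    (Real.hasDerivAt_exp _).comp u h1
  have h3 : HasDerivAt (fun u : ℝ => pB * (Real.exp (g * u) - 1) / g - pA * u)
      (pB * (Real.exp (g * u) * g) / g - pA) u :=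
    (((h2.sub_const 1).const_mul pB).div_const g).sub
      ((hasDerivAt_id u).const_mul pA |>.congr_deriv (by ring))
  convert h3 using 1
  · rfl
  field_simp

lemma clampf_mem {ψ0 : ℝ} (hψ0 : ψ0 ≤ 0) (u : ℝ) : clampf ψ0 u ∈ Icc ψ0 0 :=
  ⟨le_max_right _ _, max_le (min_le_right _ _) hψ0⟩

lemma clampf_eq_self {ψ0 u : ℝ} (hu : u ∈ Icc ψ0 0) : clampf ψ0 u = u := by
  rw [clampf, min_eq_left hu.2, max_eq_left hu.1]

lemma lipschitz_clampf (ψ0 : ℝ) : LipschitzWith 1 (clampf ψ0) :=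
  (LipschitzWith.id.min_const 0).max_const ψ0

lemma lipschitzOnWith_Fv {pA pB g : ℝ} (hpB : 0 < pB) (hg : 0 < g) (hpA : 0 ≤ pA) (b : ℝ) :
    LipschitzOnWith ((pB * Real.exp (g * b) + pA).toNNReal) (Fv pA pB g) (Iic b) := by
  apply (convex_Iic b).lipschitzOnWith_of_nnnorm_hasDerivWithin_le
    (f' := fun u => pB * Real.exp (g * u) - pA)
    (fun x _ => (hasDerivAt_Fv pA pB hg x).hasDerivWithinAt)
  intro x hx
  rw [← NNReal.coe_le_coe, coe_nnnorm, Real.coe_toNNReal _ (by positivity)]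
  rw [Real.norm_eq_abs, abs_sub_le_iff]
  have he : Real.exp (g * x) ≤ Real.exp (g * b) :=
    Real.exp_le_exp.2 (by nlinarith [mem_Iic.1 hx])
  have he0 : 0 < Real.exp (g * x) := Real.exp_pos _
  constructor <;> nlinarith

lemma lipschitz_Gv {pA pB g ψ0 : ℝ} (hpB : 0 < pB) (hpA : 0 ≤ pA) (hg : 0 < g) (hψ0 : ψ0 ≤ 0) :
    LipschitzWith ((pB * Real.exp (g * 0) + pA).toNNReal) (Gv pA pB g ψ0) := by
  have hF := lipschitzOnWith_Fv (pA := pA) hpB hg hpA 0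
  have hc := lipschitz_clampf ψ0
  apply LipschitzWith.of_dist_le_mul
  intro x y
  have hmx : clampf ψ0 x ∈ Iic (0:ℝ) := (clampf_mem hψ0 x).2
  have hmy : clampf ψ0 y ∈ Iic (0:ℝ) := (clampf_mem hψ0 y).2
  calc dist (Gv pA pB g ψ0 x) (Gv pA pB g ψ0 y)
      ≤ ↑((pB * Real.exp (g * 0) + pA).toNNReal) * dist (clampf ψ0 x) (clampf ψ0 y) :=
        hF.dist_le_mul _ hmx _ hmy
    _ ≤ ↑((pB * Real.exp (g * 0) + pA).toNNReal) * dist x y := by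
        have := hc.dist_le_mul x y
        simp only [NNReal.coe_one, one_mul] at this
        exact mul_le_mul_of_nonneg_left this (by positivity)

lemma Fv_lower {pA pB g ψ0 : ℝ} (hpB : 0 < pB) (hg : 0 < g) (u : ℝ) :
    (pB - pA) * u ≤ Fv pA pB g u := by
  have h1 : g * u ≤ Real.exp (g * u) - 1 := by
    have := Real.add_one_le_exp (g * u); linarith
  have h2 : u ≤ (Real.exp (g * u) - 1) / g := by
    rw [le_div_iff₀ hg]; linarith [h1]
  have h3 : pB * u ≤ pB * (Real.exp (g * u) - 1) / g := by
    rw [mul_div_assoc]; exact mul_le_mul_of_nonneg_left h2 hpB.le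
  rw [Fv]; linarith

lemma Gv_nonneg {pA pB g ψ0 : ℝ} (hpB : 0 < pB) (hpBA : pB ≤ pA) (hg : 0 < g) (hψ0 : ψ0 ≤ 0)
    (u : ℝ) : 0 ≤ Gv pA pB g ψ0 u := by
  have hm := clampf_mem hψ0 u
  have := Fv_lower (pA := pA) (ψ0 := ψ0) hpB hg (clampf ψ0 u)
  rw [Gv]
  nlinarith [hm.2]

lemma Fv_zero (pA pB g : ℝ) : Fv pA pB g 0 = 0 := by simp [Fv]

lemma Gv_bound {pA pB g ψ0 : ℝ} (hpB : 0 < pB) (hpA : 0 ≤ pA) (hg : 0 < g) (hψ0 : ψ0 ≤ 0)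
    (u : ℝ) : ‖Gv pA pB g ψ0 u‖ ≤ pB / g + pA * (-ψ0) := by
  have hm := clampf_mem hψ0 u
  set c := clampf ψ0 u with hc
  rw [Real.norm_eq_abs, Gv, ← hc, Fv]
  have h1 : Real.exp (g * c) ≤ 1 := Real.exp_le_one_iff.2 (by nlinarith [hm.2])
  have h2 : 0 < Real.exp (g * c) := Real.exp_pos _
  have h3 : |pB * (Real.exp (g * c) - 1) / g| ≤ pB / g := by
    rw [abs_div, abs_of_pos hg, div_le_div_iff_of_pos_right hg, abs_mul, abs_of_pos hpB]
    have : |Real.exp (g * c) - 1| ≤ 1 := by rw [abs_le]; constructor <;> nlinarith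
    nlinarith
  have h4 : |pA * c| ≤ pA * (-ψ0) := by
    rw [abs_mul, abs_of_nonneg hpA]
    have : |c| ≤ -ψ0 := abs_le.2 ⟨by linarith [hm.1], by linarith [hm.2]⟩
    nlinarith
  calc |pB * (Real.exp (g * c) - 1) / g - pA * c|
      ≤ |pB * (Real.exp (g * c) - 1) / g| + |pA * c| := abs_sub _ _
    _ ≤ pB / g + pA * (-ψ0) := add_le_add h3 h4

lemma exists_sol_n {pA pB g ψ0 : ℝ} (hpB : 0 < pB) (hpBA : pB ≤ pA) (hg : 0 < g) (hψ0 : ψ0 ≤ 0)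
    (n : ℕ) : ∃ f : ℝ → ℝ, f 0 = ψ0 ∧
      ∀ t ∈ Icc (0:ℝ) n, HasDerivWithinAt f (Gv pA pB g ψ0 (f t)) (Icc (0:ℝ) n) t := by
  have hpA : (0:ℝ) ≤ pA := (hpB.trans_le hpBA).le
  have hC : (0:ℝ) ≤ pB / g + pA * (-ψ0) := add_nonneg (by positivity) (mul_nonneg hpA (by linarith))
  have hpl : IsPicardLindelof (fun _ u => Gv pA pB g ψ0 u) (tmin := 0) (tmax := n)
      ⟨0, le_rfl, n.cast_nonneg⟩ ψ0 ⟨(pB / g + pA * (-ψ0)) * n, mul_nonneg hC n.cast_nonneg⟩ 0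
      ⟨pB / g + pA * (-ψ0), hC⟩ ((pB * Real.exp (g * 0) + pA).toNNReal) :=
    { lipschitzOnWith := fun t _ => (lipschitz_Gv hpB hpA hg hψ0).lipschitzOnWith
      continuousOn := fun x _ => continuousOn_const
      norm_le := fun t _ x _ => Gv_bound hpB hpA hg hψ0 x
      mul_max_le := by
        show (pB / g + pA * (-ψ0)) * max ((n:ℝ) - 0) (0 - 0) ≤ (pB / g + pA * (-ψ0)) * n - 0
        rw [sub_zero, sub_self, max_eq_left n.cast_nonneg, sub_zero] }
  exact hpl.exists_eq_forall_mem_Icc_hasDerivWithinAt₀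
end stmt15aux

theorem stmt_15
    (pA pB g : ℝ) (hpB : 0 < pB) (hpBA : pB ≤ pA) (hpA : pA < 1) (hg : 0 < g)
    (ψ0 : ℝ) (hψ0 : ψ0 ≤ 0) :
    ∃ ψ : ℝ → ℝ, ψ 0 = ψ0
      ∧ (∀ t ∈ Set.Ici (0:ℝ),
          HasDerivWithinAt ψ (pB * (Real.exp (g * ψ t) - 1) / g - pA * ψ t) (Set.Ici 0) t)
      ∧ (∀ φ : ℝ → ℝ, φ 0 = ψ0 →
          (∀ t ∈ Set.Ici (0:ℝ),
            HasDerivWithinAt φ (pB * (Real.exp (g * φ t) - 1) / g - pA * φ t) (Set.Ici 0) t) →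
          ∀ t ∈ Set.Ici (0:ℝ), φ t = ψ t)
      ∧ ∀ t ∈ Set.Ici (0:ℝ),
          ψ0 ≤ ψ t * Real.exp ((pA - pB) * t) ∧ ψ t * Real.exp ((pA - pB) * t) ≤ 0 := by
  have hpA0 : (0:ℝ) ≤ pA := (hpB.trans_le hpBA).le
  have hlip : ∀ t : ℝ, LipschitzWith ((pB * Real.exp (g * 0) + pA).toNNReal)
      (fun u => Gv pA pB g ψ0 u) := fun _ => lipschitz_Gv hpB hpA0 hg hψ0
  choose sol h0 hderiv using exists_sol_n hpB hpBA hg hψ0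
  have hcont : ∀ k : ℕ, ContinuousOn (sol k) (Set.Icc 0 k) :=
    fun k t ht => (hderiv k t ht).continuousWithinAt
  have hderiv' : ∀ (k : ℕ) (t : ℝ), 0 ≤ t → t < k →
      HasDerivWithinAt (sol k) (Gv pA pB g ψ0 (sol k t)) (Set.Ici t) t := by
    intro k t ht htk
    refine (hderiv k t ⟨ht, htk.le⟩).mono_of_mem_nhdsWithin ?_
    rw [mem_nhdsWithin]
    exact ⟨Set.Iio k, isOpen_Iio, htk, fun s hs => ⟨ht.trans hs.2, hs.1.le⟩⟩
  have hcons : ∀ m n : ℕ, ∀ t : ℝ, 0 ≤ t → t ≤ m → t ≤ n → sol m t = sol n t := by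
    intro m n t ht htm htn
    have heq : Set.EqOn (sol m) (sol n) (Set.Icc 0 (min (m:ℝ) n)) := by
      apply ODE_solution_unique (v := fun _ u => Gv pA pB g ψ0 u) hlip
      · exact (hcont m).mono (Set.Icc_subset_Icc_right (min_le_left _ _))
      · exact fun s hs => hderiv' m s hs.1 (lt_of_lt_of_le hs.2 (min_le_left _ _))
      · exact (hcont n).mono (Set.Icc_subset_Icc_right (min_le_right _ _))
      · exact fun s hs => hderiv' n s hs.1 (lt_of_lt_of_le hs.2 (min_le_right _ _))
      · rw [h0 m, h0 n]
    exact heq ⟨ht, le_min htm htn⟩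
  set Ψ : ℝ → ℝ := fun s => sol (⌊s⌋₊ + 1) s with hΨdef
  have hagree : ∀ (n : ℕ) (t : ℝ), 0 ≤ t → t ≤ n → Ψ t = sol n t := by
    intro n t ht htn
    refine hcons _ n t ht ?_ htn
    push_cast
    exact (Nat.lt_floor_add_one t).le
  have hΨ0 : Ψ 0 = ψ0 := h0 _
  have hΨderiv : ∀ t : ℝ, 0 ≤ t → HasDerivWithinAt Ψ (Gv pA pB g ψ0 (Ψ t)) (Set.Ici 0) t := by
    intro t ht
    set n : ℕ := ⌊t⌋₊ + 1 with hn
    have htn : t < (n : ℝ) := by rw [hn]; push_cast; exact Nat.lt_floor_add_one t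
    have h1 : HasDerivWithinAt (sol n) (Gv pA pB g ψ0 (sol n t))
        (Set.Ici 0 ∩ Set.Iio (n:ℝ)) t :=
      (hderiv n t ⟨ht, htn.le⟩).mono (fun s hs => ⟨hs.1, hs.2.le⟩)
    have h2 : HasDerivWithinAt Ψ (Gv pA pB g ψ0 (sol n t))
        (Set.Ici 0 ∩ Set.Iio (n:ℝ)) t :=
      h1.congr (fun s hs => hagree n s hs.1 hs.2.le) (hagree n t ht htn.le)
    have h3 : HasDerivWithinAt Ψ (Gv pA pB g ψ0 (sol n t)) (Set.Ici 0) t :=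
      h2.mono_of_mem_nhdsWithin
        (Filter.inter_mem self_mem_nhdsWithin
          (mem_nhdsWithin_of_mem_nhds (Iio_mem_nhds htn)))
    rw [hagree n t ht htn.le]
    exact h3
  have hΨcont : ContinuousOn Ψ (Set.Ici 0) := fun t ht => (hΨderiv t ht).continuousWithinAt
  have hΨdiff : ∀ t : ℝ, 0 < t → HasDerivAt Ψ (Gv pA pB g ψ0 (Ψ t)) t :=
    fun t ht => (hΨderiv t ht.le).hasDerivAt (Ici_mem_nhds ht)
  have hmono : MonotoneOn Ψ (Set.Ici 0) := by
    apply monotoneOn_of_deriv_nonneg (convex_Ici 0) hΨcont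
    · intro x hx; rw [interior_Ici] at hx
      exact (hΨdiff x hx).differentiableAt.differentiableWithinAt
    · intro x hx; rw [interior_Ici] at hx
      rw [(hΨdiff x hx).deriv]
      exact Gv_nonneg hpB hpBA hg hψ0 _
  have hlow : ∀ t : ℝ, 0 ≤ t → ψ0 ≤ Ψ t := by
    intro t ht
    have := hmono Set.self_mem_Ici ht ht
    rwa [hΨ0] at this
  have hupper : ∀ t : ℝ, 0 ≤ t → Ψ t ≤ 0 := by
    intro t1 ht1
    by_contra hpos
    push_neg at hpos
    set S := Set.Icc 0 t1 ∩ Ψ ⁻¹' Set.Iic 0 with hS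
    have hSne : S.Nonempty := ⟨0, ⟨le_rfl, ht1⟩, by simp [hΨ0, hψ0]⟩
    have hScl : IsClosed S :=
      ContinuousOn.preimage_isClosed_of_isClosed
        (hΨcont.mono (fun s hs => hs.1)) isClosed_Icc isClosed_Iic
    have hScp : IsCompact S := isCompact_Icc.of_isClosed_subset hScl (fun s hs => hs.1)
    obtain ⟨t0, ht0def⟩ : ∃ t0, t0 = sSup S := ⟨_, rfl⟩
    have ht0S : t0 ∈ S := by rw [ht0def]; exact hScp.sSup_mem hSne
    have ht00 : 0 ≤ t0 := ht0S.1.1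
    have ht0t1 : t0 ≤ t1 := ht0S.1.2
    have hΨt0 : Ψ t0 ≤ 0 := ht0S.2
    have ht0lt : t0 < t1 := lt_of_le_of_ne ht0t1 (by rintro rfl; exact absurd hΨt0 (not_le.2 hpos))
    have hgt : ∀ s : ℝ, t0 < s → s ≤ t1 → 0 < Ψ s := by
      intro s hs hst1
      by_contra hns
      push_neg at hns
      have hsS : s ∈ S := ⟨⟨ht00.trans hs.le, hst1⟩, hns⟩
      have hle : s ≤ t0 := by rw [ht0def]; exact le_csSup hScp.bddAbove hsS
      exact absurd hle (not_le.2 hs)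
    have hΨt0' : 0 ≤ Ψ t0 := by
      have hc : ContinuousWithinAt Ψ (Set.Ioi t0) t0 :=
        (hΨcont t0 ht00).mono (fun s hs => ht00.trans (le_of_lt hs))
      refine ge_of_tendsto hc ?_
      filter_upwards [Ioc_mem_nhdsGT_of_mem ⟨le_rfl, ht0lt⟩] with s hs
      exact (hgt s hs.1 hs.2).le
    have hG0 : Gv pA pB g ψ0 0 = 0 := by
      rw [Gv, clampf_eq_self ⟨hψ0, le_rfl⟩, Fv_zero]
    have heq : Set.EqOn Ψ (fun _ => (0:ℝ)) (Set.Icc t0 t1) := by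
      apply ODE_solution_unique (v := fun _ u => Gv pA pB g ψ0 u) hlip
      · exact hΨcont.mono (fun s hs => ht00.trans hs.1)
      · exact fun s hs => (hΨderiv s (ht00.trans hs.1)).mono
          (fun r hr => (ht00.trans hs.1).trans hr)
      · exact continuousOn_const
      · intro s hs
        have : Gv pA pB g ψ0 ((fun _ => (0:ℝ)) s) = 0 := hG0
        rw [this]
        exact hasDerivWithinAt_const s _ 0
      · simpa using le_antisymm hΨt0 hΨt0'
    have := heq ⟨ht0t1, le_rfl⟩
    simp only at this
    linarith
  have hmem : ∀ t : ℝ, 0 ≤ t → Ψ t ∈ Set.Icc ψ0 0 := fun t ht => ⟨hlow t ht, hupper t ht⟩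
  have hFderiv : ∀ t ∈ Set.Ici (0:ℝ),
      HasDerivWithinAt Ψ (pB * (Real.exp (g * Ψ t) - 1) / g - pA * Ψ t) (Set.Ici 0) t := by
    intro t ht
    have h := hΨderiv t ht
    unfold Gv at h
    rw [clampf_eq_self (hmem t ht)] at h
    exact h
  refine ⟨Ψ, hΨ0, hFderiv, ?_, ?_⟩
  · -- uniqueness
    intro φ hφ0 hφderiv t ht
    have hφcont : ContinuousOn φ (Set.Icc 0 t) :=
      fun s hs => ((hφderiv s hs.1).continuousWithinAt).mono (fun r hr => hr.1)
    obtain ⟨x, hxmem, hx⟩ := isCompact_Icc.exists_isMaxOn ⟨0, le_rfl, ht⟩ hφcont.abs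
    set M := |φ x| with hMdef
    have hM0 : 0 ≤ M := abs_nonneg _
    have hxb : ∀ r ∈ Set.Icc (0:ℝ) t, |φ r| ≤ M := fun r hr => hx hr
    have heq : Set.EqOn φ Ψ (Set.Icc 0 t) := by
      apply ODE_solution_unique_of_mem_Icc_right
        (v := fun _ u => Fv pA pB g u) (s := fun _ => Set.Iic M)
        (fun _ _ => lipschitzOnWith_Fv hpB hg hpA0 M)
        hφcont
      · intro s hs
        exact (hφderiv s hs.1).mono (fun r hr => hs.1.trans hr)
      · intro s hs
        exact le_trans (le_abs_self _) (hxb s ⟨hs.1, hs.2.le⟩)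
      · exact hΨcont.mono (fun s hs => hs.1)
      · intro s hs
        exact (hFderiv s hs.1).mono (fun r hr => hs.1.trans hr)
      · intro s hs
        exact le_trans (hupper s hs.1) hM0
      · rw [hφ0, hΨ0]
    exact heq ⟨ht, le_rfl⟩
  · -- bounds
    have hWd : ∀ s : ℝ, 0 < s → HasDerivAt (fun r => Ψ r * Real.exp ((pA - pB) * r))
        (Gv pA pB g ψ0 (Ψ s) * Real.exp ((pA - pB) * s)
          + Ψ s * (Real.exp ((pA - pB) * s) * (pA - pB))) s := by
      intro s hs
      have h2 : HasDerivAt (fun r : ℝ => Real.exp ((pA - pB) * r))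
          (Real.exp ((pA - pB) * s) * (pA - pB)) s :=
        (Real.hasDerivAt_exp _).comp s (by simpa using (hasDerivAt_id s).const_mul (pA - pB))
      exact (hΨdiff s hs).mul h2
    have hWc : ContinuousOn (fun r => Ψ r * Real.exp ((pA - pB) * r)) (Set.Ici 0) :=
      hΨcont.mul (Continuous.continuousOn (by fun_prop))
    have hmonoW : MonotoneOn (fun r => Ψ r * Real.exp ((pA - pB) * r)) (Set.Ici 0) := by
      apply monotoneOn_of_deriv_nonneg (convex_Ici 0) hWc
      · intro x hx; rw [interior_Ici] at hx
        exact (hWd x hx).differentiableAt.differentiableWithinAt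
      · intro x hx; rw [interior_Ici] at hx
        rw [(hWd x hx).deriv]
        have hm := hmem x hx.le
        have hgv : Gv pA pB g ψ0 (Ψ x) = Fv pA pB g (Ψ x) := by
          rw [Gv, clampf_eq_self hm]
        have hlowF := Fv_lower (pA := pA) (ψ0 := ψ0) hpB hg (Ψ x)
        have hE : 0 < Real.exp ((pA - pB) * x) := Real.exp_pos _
        rw [hgv]
        nlinarith [hm.2, hlowF]
    intro t ht
    constructor
    · have := hmonoW Set.self_mem_Ici ht ht
      simpa [hΨ0] using this
    · have h1 := hupper t ht
      nlinarith [Real.exp_pos ((pA - pB) * t)]
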